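/- Let K, F, Z, S be positive integers with Z < F. If a (K,F,Z,S)-PDA exists, then K·(F−Z) ≤ (Z+1)·S. Consequently the maximum K for which a (K,F,Z,S)-PDA exists satisfies K_{(F,F−Z,S)} ≤ (Z+1)·S/(F−Z). -/

import Mathlib

/-- A `(K, F, Z, S)` placement delivery array: an `F × K` array over
`{0, …, S-1} ∪ {*}` (with `none` playing the role of `*`) such that
(1) each integer occurs at most once in each row and in each column,
(2) whenever two distinct cells `(a, b)` and `(c, d)` contain the same
integer, the opposite corners `(a, d)` and `(c, b)` contain `*`, and
(3) the symbol `*` occurs exactly `Z` times in each column. -/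
def IsPDA (K F Z S : ℕ) (P : Fin F → Fin K → Option (Fin S)) : Prop :=
  (∀ (i : Fin F) (j j' : Fin K) (s : Fin S), P i j = some s → P i j' = some s → j = j') ∧
  (∀ (i i' : Fin F) (j : Fin K) (s : Fin S), P i j = some s → P i' j = some s → i = i') ∧
  (∀ (a c : Fin F) (b d : Fin K) (s : Fin S),
      (a, b) ≠ (c, d) → P a b = some s → P c d = some s →
      P a d = none ∧ P c b = none) ∧
  (∀ j : Fin K, (Finset.univ.filter (fun i => P i j = none)).card = Z)

/-- There exists a `(K, F, Z, S)` placement delivery array. -/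
def PDAExists (K F Z S : ℕ) : Prop :=
  ∃ P : Fin F → Fin K → Option (Fin S), IsPDA K F Z S P

/-- `maxK F Z S` is the largest `K` such that a `(K, F, Z, S)`-PDA exists
(the quantity `K_{(F, F-Z, S)}` of the paper). -/
noncomputable def maxK (F Z S : ℕ) : ℕ := sSup {K : ℕ | PDAExists K F Z S}

lemma pda_main_bound (K F Z S : ℕ) (hS : 0 < S) (hP : PDAExists K F Z S) :
    K * (F - Z) ≤ (Z + 1) * S := by
  classical
  obtain ⟨P, h1, h2, h3, h4⟩ := hP
  set T : Finset (Fin F × Fin K) :=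
    Finset.univ.filter (fun p => P p.1 p.2 ≠ none) with hT
  -- card of T
  have hcol : ∀ j : Fin K,
      (Finset.univ.filter (fun i => P i j ≠ none)).card = F - Z := by
    intro j
    have := Finset.card_filter_add_card_filter_not
      (s := (Finset.univ : Finset (Fin F))) (p := fun i => P i j = none)
    rw [h4 j] at this
    simp only [Finset.card_univ, Fintype.card_fin] at this
    have heq : (Finset.univ.filter (fun i => P i j ≠ none)).card
        = (Finset.univ.filter (fun i => ¬ P i j = none)).card := by
      apply Finset.card_bij (fun i _ => i) <;> simp
    omega
  have hcardT : T.card = K * (F - Z) := by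
    have := Finset.card_eq_sum_card_fiberwise
      (s := T) (t := (Finset.univ : Finset (Fin K))) (f := Prod.snd)
      (fun x _ => Finset.mem_univ _)
    rw [this]
    rw [Finset.sum_congr rfl (fun j _ => ?_), Finset.sum_const,
      Finset.card_univ, Fintype.card_fin, smul_eq_mul]
    · rw [← hcol j]
      apply Finset.card_bij (fun p _ => p.1)
      · intro p hp
        simp only [hT, Finset.mem_filter, Finset.mem_univ, true_and] at hp ⊢
        rcases hp with ⟨hp1, hp2⟩
        rw [← hp2]; exact hp1
      · intro p hp q hq hpq
        simp only [Finset.mem_filter] at hp hq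
        exact Prod.ext hpq (hp.2.trans hq.2.symm)
      · intro i hi
        simp only [Finset.mem_filter, Finset.mem_univ, true_and] at hi
        exact ⟨(i, j), by simp [hT, hi], rfl⟩
  -- each symbol occurs at most Z + 1 times
  have hfib : ∀ s : Fin S,
      ((Finset.univ : Finset (Fin F × Fin K)).filter
        (fun p => P p.1 p.2 = some s)).card ≤ Z + 1 := by
    intro s
    set A := (Finset.univ : Finset (Fin F × Fin K)).filter
      (fun p => P p.1 p.2 = some s) with hA
    rcases A.eq_empty_or_nonempty with h | ⟨⟨i0, j0⟩, h0⟩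
    · simp [h]
    · have h0' : P i0 j0 = some s := by
        simpa [hA] using h0
      have hcard1 : 1 ≤ A.card := Finset.card_pos.mpr ⟨_, h0⟩
      have hle : (A \ {(i0, j0)}).card ≤ Z := by
        rw [← h4 j0]
        apply Finset.card_le_card_of_injOn (fun p => p.1)
        · intro p hp
          simp only [Finset.mem_coe, Finset.mem_sdiff, Finset.mem_singleton, hA,
            Finset.mem_filter, Finset.mem_univ, true_and] at hp
          have hne : (p.1, p.2) ≠ (i0, j0) := by
            simpa using hp.2
          have := (h3 p.1 i0 p.2 j0 s hne hp.1 h0').1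
          simp [this]
        · intro p hp q hq hpq
          simp only [Finset.mem_coe, Finset.mem_sdiff, hA,
            Finset.mem_filter, Finset.mem_univ, true_and] at hp hq
          have hpq' : p.1 = q.1 := hpq
          have hps : P p.1 p.2 = some s := hp.1
          have hq' : P q.1 q.2 = some s := hq.1
          rw [hpq'] at hps
          exact Prod.ext hpq' (h1 q.1 p.2 q.2 s hps hq')
      have hsd : (A \ {(i0, j0)}).card = A.card - 1 := by
        rw [Finset.card_sdiff_of_subset (by simpa using h0)]
        simp
      omega
  -- combine
  have key : T.card ≤ S * (Z + 1) := by
    set f : Fin F × Fin K → Fin S := fun p => (P p.1 p.2).getD ⟨0, hS⟩ with hfd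
    have := Finset.card_eq_sum_card_fiberwise
      (s := T) (t := (Finset.univ : Finset (Fin S))) (f := f)
      (fun x _ => Finset.mem_univ _)
    rw [this]
    calc ∑ s : Fin S, (T.filter fun p => f p = s).card
        ≤ ∑ s : Fin S, (Z + 1) := by
          apply Finset.sum_le_sum
          intro s _
          refine le_trans (Finset.card_le_card ?_) (hfib s)
          intro p hp
          simp only [hT, hfd, Finset.mem_filter, Finset.mem_univ, true_and] at hp ⊢
          obtain ⟨hp1, hp2⟩ := hp
          obtain ⟨t, ht⟩ := Option.ne_none_iff_exists'.mp hp1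
          rw [ht] at hp2 ⊢
          simpa using hp2
      _ = S * (Z + 1) := by simp [Finset.sum_const, mul_comm]
  rw [hcardT] at key
  exact key.trans_eq (mul_comm S (Z + 1))

theorem pda_upper_bound_K (K F Z S : ℕ) (hK : 0 < K) (hZ : 0 < Z) (hS : 0 < S) (hZF : Z < F)
    (hP : PDAExists K F Z S) :
    K * (F - Z) ≤ (Z + 1) * S ∧
      (maxK F Z S : ℚ) ≤ ((Z : ℚ) + 1) * (S : ℚ) / ((F : ℚ) - (Z : ℚ)) := by
  refine ⟨pda_main_bound K F Z S hS hP, ?_⟩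
  have hbdd : BddAbove {K : ℕ | PDAExists K F Z S} := by
    refine ⟨(Z + 1) * S, fun K' hK' => ?_⟩
    have h := pda_main_bound K' F Z S hS (by exact hK')
    have hFZ : 1 ≤ F - Z := by omega
    calc K' = K' * 1 := (mul_one K').symm
      _ ≤ K' * (F - Z) := Nat.mul_le_mul_left _ hFZ
      _ ≤ (Z + 1) * S := h
  have hmem : PDAExists (maxK F Z S) F Z S := Nat.sSup_mem ⟨K, by exact hP⟩ hbdd
  have hM := pda_main_bound (maxK F Z S) F Z S hS hmem
  have hFZQ : (0 : ℚ) < (F : ℚ) - Z := by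
    have : (Z : ℚ) < F := by exact_mod_cast hZF
    linarith
  rw [le_div_iff₀ hFZQ]
  have hc : ((maxK F Z S : ℚ)) * ((F : ℚ) - Z) ≤ ((Z : ℚ) + 1) * S := by
    have := (Nat.cast_le (α := ℚ)).mpr hM
    push_cast [Nat.cast_sub hZF.le] at this
    linarith
  exact hc
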